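/- For coprime positive integers n, m, the enveloping group of the quandle U(n,m) is isomorphic to ℤ × ℤ. -/

import Mathlib

open Quandles

/-- The underlying set of the quandle `U(n,m)`: elements `x_i` (`i ∈ ZMod n`)
and `y_r` (`r ∈ ZMod m`). -/
def UQ (n m : ℕ) : Type := ZMod n ⊕ ZMod m

namespace UQ

/-- The quandle operation of `U(n,m)` (as the inverse action `z ◃⁻¹ w = w * z` of the paper):
`x_i * x_j = x_i`, `x_i * y_r = x_{i+1}`, `y_r * y_s = y_r`, `y_r * x_i = y_{r+1}`. -/
def op {n m : ℕ} (x y : UQ n m) : UQ n m :=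
  match x, y with
  | Sum.inl _, Sum.inl i => Sum.inl i
  | Sum.inl _, Sum.inr r => Sum.inr (r + 1)
  | Sum.inr _, Sum.inl i => Sum.inl (i + 1)
  | Sum.inr _, Sum.inr r => Sum.inr r

/-- The inverse operation. -/
def opInv {n m : ℕ} (x y : UQ n m) : UQ n m :=
  match x, y with
  | Sum.inl _, Sum.inl i => Sum.inl i
  | Sum.inl _, Sum.inr r => Sum.inr (r - 1)
  | Sum.inr _, Sum.inl i => Sum.inl (i - 1)
  | Sum.inr _, Sum.inr r => Sum.inr r

instance quandle (n m : ℕ) : Quandle (UQ n m) where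
  act := opInv
  invAct := op
  self_distrib := by
    rintro (a | a) (b | b) (c | c) <;> simp [op, opInv] <;> rfl
  left_inv := by
    rintro (a | a) (b | b) <;> simp [op, opInv] <;> rfl
  right_inv := by
    rintro (a | a) (b | b) <;> simp [op, opInv] <;> rfl
  fix := by
    rintro (a | a) <;> simp [op, opInv] <;> rfl

end UQ

namespace UQenv

open Rack

variable (n m : ℕ)

/-- The canonical map to the enveloping group, as a shelf hom. -/
abbrev eh : UQ n m →◃ Quandle.Conj (Rack.EnvelGroup (UQ n m)) := Rack.toEnvelGroup (UQ n m)

/-- Image of `x_i`. -/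
def X (i : ZMod n) : Rack.EnvelGroup (UQ n m) := eh n m (Sum.inl i)

/-- Image of `y_r`. -/
def Y (r : ZMod m) : Rack.EnvelGroup (UQ n m) := eh n m (Sum.inr r)

variable {n m}

lemma act_def (a b : UQ n m) : a ◃ b = UQ.opInv a b := rfl

lemma key (a b : UQ n m) :
    eh n m (UQ.opInv a b) = eh n m a * eh n m b * (eh n m a)⁻¹ := by
  rw [← act_def, ShelfHom.map_act, Quandle.conj_act_eq_conj]

lemma relXX (i j : ZMod n) : X n m j * X n m i * (X n m j)⁻¹ = X n m i :=
  (key (Sum.inl j) (Sum.inl i)).symm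

lemma commXX (i j : ZMod n) : Commute (X n m i) (X n m j) :=
  mul_inv_eq_iff_eq_mul.mp (relXX (n := n) (m := m) j i)

lemma relYY (r s : ZMod m) : Y n m s * Y n m r * (Y n m s)⁻¹ = Y n m r :=
  (key (Sum.inr s) (Sum.inr r)).symm

lemma commYY (r s : ZMod m) : Commute (Y n m r) (Y n m s) :=
  mul_inv_eq_iff_eq_mul.mp (relYY (n := n) (m := m) s r)

lemma relYX (s : ZMod m) (i : ZMod n) :
    Y n m s * X n m i * (Y n m s)⁻¹ = X n m (i - 1) :=
  (key (Sum.inr s) (Sum.inl i)).symm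

lemma relXY (j : ZMod n) (r : ZMod m) :
    X n m j * Y n m r * (X n m j)⁻¹ = Y n m (r - 1) :=
  (key (Sum.inl j) (Sum.inr r)).symm

lemma conjY (s : ZMod m) (i : ZMod n) :
    (Y n m s)⁻¹ * X n m i * Y n m s = X n m (i + 1) := by
  have h := relYX (n := n) (m := m) s (i + 1)
  rw [add_sub_cancel_right] at h
  rw [← h]; group

lemma conjX (j : ZMod n) (r : ZMod m) :
    (X n m j)⁻¹ * Y n m r * X n m j = Y n m (r + 1) := by
  have h := relXY (n := n) (m := m) j (r + 1)
  rw [add_sub_cancel_right] at h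
  rw [← h]; group

lemma conjY_pow (s : ZMod m) (i : ZMod n) (k : ℕ) :
    ((Y n m s)⁻¹) ^ k * X n m i * (Y n m s) ^ k = X n m (i + k) := by
  induction k generalizing i with
  | zero => simp
  | succ k ih =>
    rw [pow_succ ((Y n m s)⁻¹), pow_succ' (Y n m s)]
    have : ((Y n m s)⁻¹) ^ k * (Y n m s)⁻¹ * X n m i * (Y n m s * (Y n m s) ^ k)
        = ((Y n m s)⁻¹) ^ k * ((Y n m s)⁻¹ * X n m i * Y n m s) * (Y n m s) ^ k := by
      group
    rw [this, conjY, ih]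
    congr 1
    push_cast
    ring

lemma conjX_pow (j : ZMod n) (r : ZMod m) (k : ℕ) :
    ((X n m j)⁻¹) ^ k * Y n m r * (X n m j) ^ k = Y n m (r + k) := by
  induction k generalizing r with
  | zero => simp
  | succ k ih =>
    rw [pow_succ ((X n m j)⁻¹), pow_succ' (X n m j)]
    have : ((X n m j)⁻¹) ^ k * (X n m j)⁻¹ * Y n m r * (X n m j * (X n m j) ^ k)
        = ((X n m j)⁻¹) ^ k * ((X n m j)⁻¹ * Y n m r * X n m j) * (X n m j) ^ k := by
      group
    rw [this, conjX, ih]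
    congr 1
    push_cast
    ring

lemma commXYn (s : ZMod m) (i : ZMod n) : Commute (X n m i) ((Y n m s) ^ n) := by
  have h := conjY_pow (n := n) (m := m) s i n
  rw [ZMod.natCast_self, add_zero, inv_pow] at h
  show X n m i * (Y n m s) ^ n = (Y n m s) ^ n * X n m i
  calc X n m i * (Y n m s) ^ n
      = (Y n m s) ^ n * (((Y n m s) ^ n)⁻¹ * X n m i * (Y n m s) ^ n) := by group
    _ = (Y n m s) ^ n * X n m i := by rw [h]

lemma commYXm (j : ZMod n) (r : ZMod m) : Commute (Y n m r) ((X n m j) ^ m) := by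
  have h := conjX_pow (n := n) (m := m) j r m
  rw [ZMod.natCast_self, add_zero, inv_pow] at h
  show Y n m r * (X n m j) ^ m = (X n m j) ^ m * Y n m r
  calc Y n m r * (X n m j) ^ m
      = (X n m j) ^ m * (((X n m j) ^ m)⁻¹ * Y n m r * (X n m j) ^ m) := by group
    _ = (X n m j) ^ m * Y n m r := by rw [h]

lemma commXY (h : Nat.Coprime n m) (i : ZMod n) (r : ZMod m) :
    Commute (X n m i) (Y n m r) := by
  set A := X n m i with hA
  set B := Y n m r with hB
  set c := A⁻¹ * (B⁻¹ * A * B) with hc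
  have hAc : Commute A c := by
    have h1 : Commute A A⁻¹ := (Commute.refl A).inv_right
    have h2 : Commute A (X n m (i + 1)) := commXX i (i + 1)
    have : c = A⁻¹ * X n m (i + 1) := by rw [hc, conjY]
    rw [this]
    exact h1.mul_right h2
  have hABc : B⁻¹ * A * B = A * c := by rw [hc]; group
  -- c ^ m = 1
  have hcm : c ^ m = 1 := by
    have h1 : B⁻¹ * A ^ m * B = (B⁻¹ * A * B) ^ m := by
      have := conj_pow (i := m) (a := B⁻¹) (b := A)
      rw [inv_inv] at this
      rw [this]
    have h2 : B⁻¹ * A ^ m * B = A ^ m := by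
      have hcomm := commYXm (n := n) (m := m) i r
      rw [← hA, ← hB] at hcomm
      calc B⁻¹ * A ^ m * B = B⁻¹ * (A ^ m * B) := by group
        _ = B⁻¹ * (B * A ^ m) := by rw [← hcomm.eq]
        _ = A ^ m := by group
    have h3 : A ^ m * c ^ m = A ^ m := by
      rw [← hAc.mul_pow, ← hABc, ← h1, h2]
    exact mul_left_cancel (by rw [h3, mul_one])
  -- c ^ n = 1
  have hcn : c ^ n = 1 := by
    set d := B⁻¹ * (A⁻¹ * B * A) with hd
    have hdc : d = c⁻¹ := by rw [hd, hc]; group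
    have hBd : Commute B d := by
      have h1 : Commute B B⁻¹ := (Commute.refl B).inv_right
      have h2 : Commute B (Y n m (r + 1)) := commYY r (r + 1)
      have : d = B⁻¹ * Y n m (r + 1) := by rw [hd, conjX]
      rw [this]
      exact h1.mul_right h2
    have hBAd : A⁻¹ * B * A = B * d := by rw [hd]; group
    have h1 : A⁻¹ * B ^ n * A = (A⁻¹ * B * A) ^ n := by
      have := conj_pow (i := n) (a := A⁻¹) (b := B)
      rw [inv_inv] at this
      rw [this]
    have h2 : A⁻¹ * B ^ n * A = B ^ n := by
      have hcomm := commXYn (n := n) (m := m) r i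
      rw [← hA, ← hB] at hcomm
      calc A⁻¹ * B ^ n * A = A⁻¹ * (B ^ n * A) := by group
        _ = A⁻¹ * (A * B ^ n) := by rw [← hcomm.eq]
        _ = B ^ n := by group
    have h3 : B ^ n * d ^ n = B ^ n := by
      rw [← hBd.mul_pow, ← hBAd, ← h1, h2]
    have hdn : d ^ n = 1 := mul_left_cancel (by rw [h3, mul_one])
    rw [hdc, inv_pow, inv_eq_one] at hdn
    exact hdn
  -- Bezout
  obtain ⟨u, v, huv⟩ := h.isCoprime
  have hc1 : c = 1 := by
    calc c = c ^ (1 : ℤ) := (zpow_one c).symm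
      _ = c ^ (u * n + v * m) := by rw [huv]
      _ = (c ^ (n : ℤ)) ^ u * (c ^ (m : ℤ)) ^ v := by
          rw [zpow_add, mul_comm u, mul_comm v, zpow_mul, zpow_mul]
      _ = 1 := by
          rw [zpow_natCast, zpow_natCast, hcn, hcm, one_zpow, one_zpow, one_mul]
  have : B⁻¹ * A * B = A := by
    rw [hABc, hc1, mul_one]
  show A * B = B * A
  calc A * B = B * (B⁻¹ * A * B) := by group
    _ = B * A := by rw [this]

lemma X_const (h : Nat.Coprime n m) (hn : 0 < n) (i : ZMod n) :
    X n m i = X n m 0 := by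
  haveI : NeZero n := ⟨hn.ne'⟩
  have step : ∀ j : ZMod n, X n m (j + 1) = X n m j := by
    intro j
    have h1 := relYX (n := n) (m := m) 0 (j + 1)
    rw [add_sub_cancel_right] at h1
    have h2 := commXY h (j + 1) (0 : ZMod m)
    calc X n m (j + 1) = X n m (j + 1) * Y n m 0 * (Y n m 0)⁻¹ := by group
      _ = Y n m 0 * X n m (j + 1) * (Y n m 0)⁻¹ := by rw [h2.eq]
      _ = X n m j := h1
  have natrec : ∀ k : ℕ, X n m (k : ZMod n) = X n m 0 := by
    intro k
    induction k with
    | zero => simp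
    | succ k ih => rw [Nat.cast_succ, step, ih]
  rw [← ZMod.natCast_rightInverse i, natrec]

lemma Y_const (h : Nat.Coprime n m) (hm : 0 < m) (r : ZMod m) :
    Y n m r = Y n m 0 := by
  haveI : NeZero m := ⟨hm.ne'⟩
  have step : ∀ s : ZMod m, Y n m (s + 1) = Y n m s := by
    intro s
    have h1 := relXY (n := n) (m := m) 0 (s + 1)
    rw [add_sub_cancel_right] at h1
    have h2 := (commXY h (0 : ZMod n) (s + 1)).symm
    calc Y n m (s + 1) = Y n m (s + 1) * X n m 0 * (X n m 0)⁻¹ := by group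
      _ = X n m 0 * Y n m (s + 1) * (X n m 0)⁻¹ := by rw [h2.eq]
      _ = Y n m s := h1
  have natrec : ∀ k : ℕ, Y n m (k : ZMod m) = Y n m 0 := by
    intro k
    induction k with
    | zero => simp
    | succ k ih => rw [Nat.cast_succ, step, ih]
  rw [← ZMod.natCast_rightInverse r, natrec]

/-- The abelianization-type shelf hom to `ℤ × ℤ`. -/
def f (n m : ℕ) : UQ n m →◃ Quandle.Conj (Multiplicative (ℤ × ℤ)) where
  toFun z :=
    Multiplicative.ofAdd (Sum.elim (fun _ => ((1 : ℤ), (0 : ℤ))) (fun _ => (0, 1)) z)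
  map_act' := by
    rintro (i | i) (j | j) <;>
      simp [act_def, UQ.opInv, Quandle.conj_act_eq_conj, mul_inv_cancel_comm] <;> rfl

end UQenv

/-- For coprime positive integers `n, m`, the enveloping group of the quandle `U(n,m)`
is isomorphic to `ℤ × ℤ`. -/
theorem envelGroup_U_eq_ZxZ (n m : ℕ) (hn : 0 < n) (hm : 0 < m) (h : Nat.Coprime n m) :
    Nonempty (Rack.EnvelGroup (UQ n m) ≃* Multiplicative (ℤ × ℤ)) := by
  haveI : NeZero n := ⟨hn.ne'⟩
  haveI : NeZero m := ⟨hm.ne'⟩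
  let φ : Rack.EnvelGroup (UQ n m) →* Multiplicative (ℤ × ℤ) :=
    Rack.toEnvelGroup.map (UQenv.f n m)
  have hXY : Commute (UQenv.X n m 0) (UQenv.Y n m 0) := UQenv.commXY h 0 0
  let ψ : Multiplicative (ℤ × ℤ) →* Rack.EnvelGroup (UQ n m) :=
    { toFun := fun p => UQenv.X n m 0 ^ (Multiplicative.toAdd p).1 *
        UQenv.Y n m 0 ^ (Multiplicative.toAdd p).2
      map_one' := by simp
      map_mul' := fun p q => by
        show UQenv.X n m 0 ^ ((Multiplicative.toAdd p).1 + (Multiplicative.toAdd q).1) *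
            UQenv.Y n m 0 ^ ((Multiplicative.toAdd p).2 + (Multiplicative.toAdd q).2) = _
        rw [zpow_add, zpow_add]
        exact ((hXY.zpow_zpow (Multiplicative.toAdd q).1
          (Multiplicative.toAdd p).2).mul_mul_mul_comm _ _) }
  have hF : ψ.comp φ = MonoidHom.id _ := by
    apply Rack.toEnvelGroup.map.symm.injective
    apply DFunLike.ext
    intro z
    show ψ (φ (UQenv.eh n m z)) = UQenv.eh n m z
    rcases z with i | r
    · show UQenv.X n m 0 ^ (1 : ℤ) * UQenv.Y n m 0 ^ (0 : ℤ) = UQenv.X n m i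
      rw [zpow_one, zpow_zero, mul_one]
      exact (UQenv.X_const h hn i).symm
    · show UQenv.X n m 0 ^ (0 : ℤ) * UQenv.Y n m 0 ^ (1 : ℤ) = UQenv.Y n m r
      rw [zpow_one, zpow_zero, one_mul]
      exact (UQenv.Y_const h hm r).symm
  have left : ∀ g, ψ (φ g) = g := fun g => DFunLike.congr_fun hF g
  have right : ∀ p, φ (ψ p) = p := by
    intro p
    show φ (UQenv.X n m 0 ^ (Multiplicative.toAdd p).1 *
      UQenv.Y n m 0 ^ (Multiplicative.toAdd p).2) = p
    rw [map_mul, map_zpow, map_zpow]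
    have h1 : φ (UQenv.X n m 0) = Multiplicative.ofAdd ((1 : ℤ), (0 : ℤ)) := rfl
    have h2 : φ (UQenv.Y n m 0) = Multiplicative.ofAdd ((0 : ℤ), (1 : ℤ)) := rfl
    rw [h1, h2, ← ofAdd_zsmul, ← ofAdd_zsmul, ← ofAdd_add]
    conv_rhs => rw [← ofAdd_toAdd p]
    apply congrArg
    apply Prod.ext <;> simp
  exact ⟨⟨⟨φ, ψ, left, right⟩, map_mul φ⟩⟩
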